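/- Let k be an algebraically closed field of characteristic p, W = W(k), and let M be a free W-module of rank 2 with F, V as in a Dieudonné module (FV = VF = p, F σ-linear, V σ^{−1}-linear, dim M/FM = dim M/VM = 1). If F(M/pM) = V(M/pM) then F²M = pM, and M is isomorphic to the Dieudonné module M₂ = W e₁ ⊕ W e₂ with F e₁ = V e₁ = e₂ and F e₂ = V e₂ = p e₁. -/

import Mathlib

open WittVector

section aux
variable {p : ℕ} [hp : Fact p.Prime] {k : Type*} [Field k] [CharP k p]

lemma aux_dvd_coeff (n : ℕ) (x : WittVector p k) (h : (p : WittVector p k)^n ∣ x) :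
    ∀ i < n, x.coeff i = 0 := by
  induction n generalizing x with
  | zero => intro i hi; omega
  | succ n ih =>
    obtain ⟨z, rfl⟩ := h
    have h1 : (p : WittVector p k)^(n+1) * z =
        verschiebung (frobenius ((p : WittVector p k)^n * z)) := by
      rw [verschiebung_frobenius, pow_succ]; ring
    rw [h1]
    intro i hi
    cases i with
    | zero => exact verschiebung_coeff_zero _
    | succ j =>
      rw [verschiebung_coeff_succ, coeff_frobenius_charP]
      rw [ih ((p : WittVector p k)^n * z) ⟨z, rfl⟩ j (by omega)]
      exact zero_pow hp.out.ne_zero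

variable [PerfectRing k p]

lemma aux_coeff_dvd (n : ℕ) (x : WittVector p k) (h : ∀ i < n, x.coeff i = 0) :
    (p : WittVector p k)^n ∣ x := by
  induction n generalizing x with
  | zero => simp
  | succ n ih =>
    set w : WittVector p k := WittVector.mk p (fun i => x.coeff (i+1)) with hw
    set z : WittVector p k := (frobeniusEquiv p k).symm w with hz
    have hfz : frobenius z = w := by
      have := (frobeniusEquiv p k).apply_symm_apply w
      rwa [WittVector.frobeniusEquiv_apply] at this
    have hx : x = z * p := by
      rw [← verschiebung_frobenius, hfz]
      ext i
      cases i with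
      | zero => rw [verschiebung_coeff_zero]; exact h 0 (Nat.succ_pos n)
      | succ j => rw [verschiebung_coeff_succ, hw, WittVector.coeff_mk]
    have hzc : ∀ i < n, z.coeff i = 0 := by
      intro i hi
      have : (frobenius z).coeff i = 0 := by
        rw [hfz, hw, WittVector.coeff_mk]; exact h (i+1) (by omega)
      rw [coeff_frobenius_charP] at this
      exact pow_eq_zero_iff hp.out.ne_zero |>.mp this
    obtain ⟨c, hc⟩ := ih z hzc
    exact ⟨c, by rw [hx, hc]; ring⟩

lemma aux_dvd_iff (n : ℕ) (x : WittVector p k) :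
    (p : WittVector p k)^n ∣ x ↔ ∀ i < n, x.coeff i = 0 :=
  ⟨aux_dvd_coeff n x, aux_coeff_dvd n x⟩

lemma aux_sep (x : WittVector p k) (h : ∀ n, (p : WittVector p k)^n ∣ x) : x = 0 := by
  ext i
  rw [WittVector.zero_coeff]
  exact aux_dvd_coeff (i+1) x (h (i+1)) i (by omega)

lemma aux_mod_iff (n : ℕ) (x y : WittVector p k) :
    (p : WittVector p k)^n ∣ (x - y) ↔ ∀ i < n, x.coeff i = y.coeff i := by
  constructor
  · intro h i hi
    have h0 : ∀ j < n, (x - y).coeff j = 0 := aux_dvd_coeff n _ h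
    have ht : truncate n (x - y) = 0 := by
      ext j
      rw [coeff_truncate, TruncatedWittVector.coeff_zero]
      exact h0 j j.isLt
    have : truncate n x = truncate n y := by
      rw [← sub_eq_zero, ← map_sub, ht]
    have := congrArg (fun t => TruncatedWittVector.coeff ⟨i, hi⟩ t) this
    simpa only [coeff_truncate] using this
  · intro h
    apply aux_coeff_dvd
    intro i hi
    have ht : truncate n x = truncate n y := by
      ext j
      rw [coeff_truncate, coeff_truncate]
      exact h j j.isLt
    have ht2 : truncate n (x - y) = 0 := by rw [map_sub, ht, sub_self]
    have := congrArg (fun t => TruncatedWittVector.coeff ⟨i, hi⟩ t) ht2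
    simpa only [coeff_truncate, TruncatedWittVector.coeff_zero] using this

lemma aux_limit (u : ℕ → WittVector p k)
    (h : ∀ n m, n ≤ m → (p : WittVector p k)^n ∣ (u m - u n)) :
    ∃ s : WittVector p k, ∀ n, (p : WittVector p k)^n ∣ (s - u n) := by
  refine ⟨WittVector.mk p (fun i => (u (i+1)).coeff i), fun n => ?_⟩
  rw [aux_mod_iff]
  intro i hi
  rw [WittVector.coeff_mk]
  rcases le_total (i+1) n with hle | hle
  · exact ((aux_mod_iff (i+1) (u n) (u (i+1))).mp (h (i+1) n hle) i (by omega)).symm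
  · exact (aux_mod_iff n (u (i+1)) (u n)).mp (h n (i+1) hle) i hi

lemma aux_ksolve {k : Type*} [Field k] [IsAlgClosed k] (a b c : k) (ha : a ≠ 0)
    (n : ℕ) (hn : 1 < n) : ∃ z : k, a * z^n + b * z = c := by
  set q : Polynomial k := Polynomial.C a * Polynomial.X ^ n +
    (Polynomial.C b * Polynomial.X + Polynomial.C (-c)) with hq
  have hdeg : q.degree = n := by
    rw [hq]
    rw [Polynomial.degree_add_eq_left_of_degree_lt]
    · exact Polynomial.degree_C_mul_X_pow n ha
    · rw [Polynomial.degree_C_mul_X_pow n ha]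
      exact lt_of_le_of_lt (Polynomial.degree_linear_le) (by exact_mod_cast hn)
  obtain ⟨z, hz⟩ := IsAlgClosed.exists_root q (by rw [hdeg]; exact_mod_cast (by omega : n ≠ 0))
  refine ⟨z, ?_⟩
  have := hz
  rw [Polynomial.IsRoot, hq] at this
  simp only [Polynomial.eval_add, Polynomial.eval_mul, Polynomial.eval_pow, Polynomial.eval_C,
    Polynomial.eval_X] at this
  linear_combination this

lemma aux_k1 {k : Type*} [Field k] [IsAlgClosed k] (B : k) (hB : B ≠ 0) (n : ℕ) (hn : 1 < n) :
    ∃ S : k, S ≠ 0 ∧ S^n = B * S := by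
  obtain ⟨S, hS⟩ := IsAlgClosed.exists_root (Polynomial.X ^ (n-1) - Polynomial.C B)
    (by rw [Polynomial.degree_X_pow_sub_C (by omega)]; exact_mod_cast (by omega : n - 1 ≠ 0))
  have hSe : S^(n-1) = B := by
    have := hS
    rw [Polynomial.IsRoot] at this
    simp only [Polynomial.eval_sub, Polynomial.eval_pow, Polynomial.eval_X,
      Polynomial.eval_C] at this
    linear_combination this
  have hS0 : S ≠ 0 := by
    intro h
    rw [h, zero_pow (by omega : n - 1 ≠ 0)] at hSe
    exact hB hSe.symm
  refine ⟨S, hS0, ?_⟩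
  have : S^n = S^(n-1) * S := by
    rw [← pow_succ]
    congr 1
    omega
  rw [this, hSe]

end aux

section aux2
variable {R : Type*} [CommRing R] {M : Type*} [AddCommGroup M] [Module R M]

lemma aux_nakayama [IsLocalRing R] [Module.Finite R M] (r : R) (hr : ¬ IsUnit r)
    (N : Submodule R M) (h : N ⊔ (Ideal.span {r}) • (⊤ : Submodule R M) = ⊤) : N = ⊤ := by
  set I : Ideal R := Ideal.span {r} with hI
  rw [← Submodule.Quotient.subsingleton_iff]
  suffices h2 : (⊤ : Submodule R (M ⧸ N)) = ⊥ by
    constructor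
    intro a b
    have ha : a ∈ (⊤ : Submodule R (M ⧸ N)) := trivial
    have hb : b ∈ (⊤ : Submodule R (M ⧸ N)) := trivial
    rw [h2] at ha hb
    rw [Submodule.mem_bot] at ha hb
    rw [ha, hb]
  have hmap : Submodule.map N.mkQ (N ⊔ I • ⊤) = ⊤ := by
    rw [h, Submodule.map_top, Submodule.range_mkQ]
  rw [Submodule.map_sup, Submodule.map_smul'', Submodule.map_top, Submodule.range_mkQ] at hmap
  have hN : Submodule.map N.mkQ N = ⊥ := by
    rw [eq_bot_iff]
    rintro x ⟨n, hn, rfl⟩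
    rw [Submodule.mem_bot, Submodule.mkQ_apply, Submodule.Quotient.mk_eq_zero]
    exact hn
  rw [hN, bot_sup_eq] at hmap
  apply Submodule.eq_bot_of_le_smul_of_le_jacobson_bot I ⊤ (Module.finite_def.mp inferInstance)
  · rw [hmap]
  · rw [IsLocalRing.jacobson_eq_maximalIdeal ⊥ bot_ne_top, hI, Ideal.span_le]
    intro x hx
    rw [Set.mem_singleton_iff] at hx
    rw [hx, SetLike.mem_coe, IsLocalRing.mem_maximalIdeal]
    exact hr

lemma aux_basis_of_span [Nontrivial R] [IsNoetherianRing R] [Module.Free R M]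
    [Module.Finite R M]
    (hrank : Module.finrank R M = 2) (w : Fin 2 → M)
    (hw : Submodule.span R (Set.range w) = ⊤) :
    ∃ bas : Module.Basis (Fin 2) R M, bas 0 = w 0 ∧ bas 1 = w 1 := by
  classical
  let b₀ : Module.Basis (Fin 2) R M :=
    (Module.Free.chooseBasis R M).reindex (Fintype.equivFinOfCardEq
      (by rw [← Module.finrank_eq_card_chooseBasisIndex, hrank]))
  let L : (Fin 2 → R) →ₗ[R] M := Module.Basis.constr (Pi.basisFun R (Fin 2)) ℕ w
  have hsurj : Function.Surjective L := by
    rw [← LinearMap.range_eq_top, Module.Basis.constr_range, hw]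
  have hinj : Function.Injective L := by
    have hendo : Function.Surjective (b₀.equivFun.toLinearMap.comp L) :=
      b₀.equivFun.surjective.comp hsurj
    have := OrzechProperty.injective_of_surjective_endomorphism
      (b₀.equivFun.toLinearMap.comp L) hendo
    intro x y hxy
    exact this (by simp [LinearMap.comp_apply, hxy])
  let E : (Fin 2 → R) ≃ₗ[R] M := LinearEquiv.ofBijective L ⟨hinj, hsurj⟩
  refine ⟨(Pi.basisFun R (Fin 2)).map E, ?_, ?_⟩ <;>
    simp only [Module.Basis.map_apply] <;>
    exact Module.Basis.constr_basis (Pi.basisFun R (Fin 2)) ℕ w _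

end aux2

set_option maxHeartbeats 2000000 in
theorem stmt12 (p : ℕ) [Fact p.Prime] (k : Type*) [Field k] [IsAlgClosed k] [CharP k p]
    (M : Type*) [AddCommGroup M] [Module (WittVector p k) M]
    [Module.Free (WittVector p k) M] [Module.Finite (WittVector p k) M]
    (hrank : Module.finrank (WittVector p k) M = 2)
    (F V : M → M)
    (hFadd : ∀ x y, F (x + y) = F x + F y)
    (hFsmul : ∀ (a : WittVector p k) (x : M),
      F (a • x) = (WittVector.frobeniusEquiv p k a) • F x)
    (hVadd : ∀ x y, V (x + y) = V x + V y)
    (hVsmul : ∀ (a : WittVector p k) (x : M),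
      V (a • x) = ((WittVector.frobeniusEquiv p k).symm a) • V x)
    (hFV : ∀ x, F (V x) = (p : WittVector p k) • x)
    (hVF : ∀ x, V (F x) = (p : WittVector p k) • x)
    (hdimF : Nonempty ((M ⧸ Submodule.span (WittVector p k) (Set.range F)) ≃ₗ[WittVector p k]
      (WittVector p k ⧸ (Ideal.span {(p : WittVector p k)}))))
    (hdimV : Nonempty ((M ⧸ Submodule.span (WittVector p k) (Set.range V)) ≃ₗ[WittVector p k]
      (WittVector p k ⧸ (Ideal.span {(p : WittVector p k)}))))
    (hss : Submodule.span (WittVector p k) (Set.range F)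
        ⊔ (Ideal.span {(p : WittVector p k)} • (⊤ : Submodule (WittVector p k) M))
      = Submodule.span (WittVector p k) (Set.range V)
        ⊔ (Ideal.span {(p : WittVector p k)} • (⊤ : Submodule (WittVector p k) M))) :
    Submodule.span (WittVector p k) (Set.range fun x => F (F x))
      = Ideal.span {(p : WittVector p k)} • (⊤ : Submodule (WittVector p k) M) ∧
    ∃ bas : Module.Basis (Fin 2) (WittVector p k) M,
      F (bas 0) = bas 1 ∧ V (bas 0) = bas 1 ∧
      F (bas 1) = (p : WittVector p k) • bas 0 ∧ V (bas 1) = (p : WittVector p k) • bas 0 := by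
  classical
  have hp : Fact p.Prime := inferInstance
  -- basic ring facts
  haveI hdvr : IsDiscreteValuationRing (WittVector p k) := WittVector.isDiscreteValuationRing
  haveI : IsLocalRing (WittVector p k) := hdvr.toIsLocalRing
  haveI : IsPrincipalIdealRing (WittVector p k) := hdvr.toIsPrincipalIdealRing
  haveI : IsNoetherianRing (WittVector p k) := PrincipalIdealRing.isNoetherianRing
  have hirr : Irreducible (p : WittVector p k) := WittVector.irreducible p
  have hpu : ¬ IsUnit (p : WittVector p k) := hirr.not_isUnit
  have hpne : (p : WittVector p k) ≠ 0 := hirr.ne_zero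
  set σ := WittVector.frobeniusEquiv p k with hσdef
  -- F 0 = 0, V 0 = 0
  have hF0 : F 0 = 0 := by
    have h := hFadd 0 0
    rw [add_zero] at h
    exact (left_eq_add.mp h)
  have hV0 : V 0 = 0 := by
    have h := hVadd 0 0
    rw [add_zero] at h
    exact (left_eq_add.mp h)
  -- submodules
  set SF : Submodule (WittVector p k) M :=
    { carrier := Set.range F
      zero_mem' := ⟨0, hF0⟩
      add_mem' := by rintro a b ⟨x, rfl⟩ ⟨y, rfl⟩; exact ⟨x + y, hFadd x y⟩
      smul_mem' := by
        rintro c a ⟨x, rfl⟩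
        exact ⟨σ.symm c • x, by rw [hFsmul, σ.apply_symm_apply]⟩ } with hSFdef
  set SV : Submodule (WittVector p k) M :=
    { carrier := Set.range V
      zero_mem' := ⟨0, hV0⟩
      add_mem' := by rintro a b ⟨x, rfl⟩ ⟨y, rfl⟩; exact ⟨x + y, hVadd x y⟩
      smul_mem' := by
        rintro c a ⟨x, rfl⟩
        exact ⟨σ c • x, by rw [hVsmul, σ.symm_apply_apply]⟩ } with hSVdef
  have hSFspan : Submodule.span (WittVector p k) (Set.range F) = SF := Submodule.span_eq SF
  have hSVspan : Submodule.span (WittVector p k) (Set.range V) = SV := Submodule.span_eq SV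
  set PM : Submodule (WittVector p k) M :=
    Ideal.span {(p : WittVector p k)} • (⊤ : Submodule (WittVector p k) M) with hPMdef
  have hPM : ∀ m : M, m ∈ PM ↔ ∃ z : M, m = (p : WittVector p k) • z := by
    intro m
    rw [hPMdef, Submodule.ideal_span_singleton_smul]
    constructor
    · intro hm
      rw [← SetLike.mem_coe, Submodule.coe_pointwise_smul] at hm
      obtain ⟨z, -, rfl⟩ := Set.mem_smul_set.mp hm
      exact ⟨z, rfl⟩
    · rintro ⟨z, rfl⟩
      exact Submodule.smul_mem_pointwise_smul z _ ⊤ trivial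
  have hPMF : PM ≤ SF := by
    intro m hm
    obtain ⟨z, rfl⟩ := (hPM m).mp hm
    exact ⟨V z, hFV z⟩
  have hPMV : PM ≤ SV := by
    intro m hm
    obtain ⟨z, rfl⟩ := (hPM m).mp hm
    exact ⟨F z, hVF z⟩
  -- F and V have the same image
  have hFV' : SF = SV := by
    have h1 : SF ⊔ PM = SF := sup_eq_left.mpr hPMF
    have h2 : SV ⊔ PM = SV := sup_eq_left.mpr hPMV
    rw [hSFspan, hSVspan] at hss
    rw [← h1, ← h2, hss]
  -- Goal 1 : F² M = p M
  have goal1 : Submodule.span (WittVector p k) (Set.range fun x => F (F x)) = PM := by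
    apply le_antisymm
    · rw [Submodule.span_le]
      rintro m ⟨x, rfl⟩
      have hFx : F x ∈ SV := hFV' ▸ (⟨x, rfl⟩ : F x ∈ SF)
      obtain ⟨z, hz⟩ := hFx
      rw [SetLike.mem_coe, hPM]
      exact ⟨z, by show F (F x) = (p : WittVector p k) • z; rw [← hz, hFV]⟩
    · intro m hm
      obtain ⟨z, rfl⟩ := (hPM m).mp hm
      have hVz : V z ∈ SF := hFV'.symm ▸ (⟨z, rfl⟩ : V z ∈ SV)
      obtain ⟨w, hw⟩ := hVz
      apply Submodule.subset_span
      exact ⟨w, by show F (F w) = (p : WittVector p k) • z; rw [hw, hFV]⟩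
  have hFFPM : ∀ x : M, ∃ z : M, F (F x) = (p : WittVector p k) • z := by
    intro x
    have : F (F x) ∈ PM := by
      rw [← goal1]
      exact Submodule.subset_span ⟨x, rfl⟩
    exact (hPM _).mp this
  -- SF is a coatom
  have hcoatom : IsCoatom SF := by
    obtain ⟨e⟩ := hdimF
    rw [hSFspan] at e
    have hmax : (Ideal.span {(p : WittVector p k)}).IsMaximal :=
      PrincipalIdealRing.isMaximal_of_irreducible hirr
    haveI : IsSimpleModule (WittVector p k)
        ((WittVector p k) ⧸ Ideal.span {(p : WittVector p k)}) :=
      isSimpleModule_iff_isCoatom.mpr (Ideal.isMaximal_def.mp hmax)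
    haveI : IsSimpleModule (WittVector p k) (M ⧸ SF) := IsSimpleModule.congr e
    exact isSimpleModule_iff_isCoatom.mp this
  -- pick x₀ ∉ SF
  have hSFne : SF ≠ ⊤ := hcoatom.1
  have hex : ∃ x₀ : M, x₀ ∉ SF := by
    by_contra h
    push_neg at h
    exact hSFne (Submodule.eq_top_iff'.mpr h)
  obtain ⟨x₀, hx₀⟩ := hex
  set y₀ : M := F x₀ with hy₀def
  -- SF ⊔ span {x₀} = ⊤
  have hx0span : SF ⊔ Submodule.span (WittVector p k) {x₀} = ⊤ := by
    apply hcoatom.2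
    refine lt_of_le_of_ne le_sup_left (fun h => hx₀ ?_)
    rw [h]
    exact Submodule.mem_sup_right (Submodule.mem_span_singleton_self x₀)
  -- span {x₀, y₀} ⊔ PM = ⊤
  have hNtop : Submodule.span (WittVector p k) {x₀, y₀} ⊔ PM = ⊤ := by
    set N := Submodule.span (WittVector p k) {x₀, y₀} ⊔ PM with hNdef
    have hSFN : SF ≤ N := by
      rintro m ⟨z, rfl⟩
      have hz : z ∈ SF ⊔ Submodule.span (WittVector p k) {x₀} := by rw [hx0span]; trivial
      obtain ⟨u, hu, v, hv, rfl⟩ := Submodule.mem_sup.mp hz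
      obtain ⟨w, rfl⟩ := hu
      obtain ⟨c, rfl⟩ := Submodule.mem_span_singleton.mp hv
      rw [hFadd, hFsmul]
      apply N.add_mem
      · obtain ⟨z', hz'⟩ := hFFPM w
        rw [hz']
        exact Submodule.mem_sup_right ((hPM _).mpr ⟨z', rfl⟩)
      · apply N.smul_mem
        exact Submodule.mem_sup_left (Submodule.subset_span (Set.mem_insert_of_mem _ rfl))
    have hxN : x₀ ∈ N := Submodule.mem_sup_left (Submodule.subset_span (Set.mem_insert _ _))
    have : (⊤ : Submodule (WittVector p k) M) ≤ N := by
      rw [← hx0span]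
      apply sup_le hSFN
      rw [Submodule.span_le, Set.singleton_subset_iff]
      exact hxN
    exact le_antisymm le_top this
  have hgen : Submodule.span (WittVector p k) {x₀, y₀} = ⊤ :=
    aux_nakayama (p : WittVector p k) hpu _ hNtop
  -- basis (x₀, y₀)
  obtain ⟨b, hb0, hb1⟩ := aux_basis_of_span hrank ![x₀, y₀] (by
    apply le_antisymm le_top
    rw [← hgen, Submodule.span_le]
    rintro m (rfl | rfl)
    · exact Submodule.subset_span ⟨0, rfl⟩
    · exact Submodule.subset_span ⟨1, rfl⟩)
  rw [Matrix.cons_val_zero] at hb0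
  rw [Matrix.cons_val_one, Matrix.cons_val_zero] at hb1
  -- residue map
  set ρ : WittVector p k →+* k := WittVector.constantCoeff with hρdef
  have hρ : ∀ x : WittVector p k, ρ x = x.coeff 0 := fun x => rfl
  have hρσ : ∀ x, ρ (σ x) = (ρ x)^p := by
    intro x
    have hfe : σ x = WittVector.frobenius x := by
      rw [hσdef, WittVector.frobeniusEquiv_apply]
    rw [hρ, hρ, hfe, coeff_frobenius_charP]
  have hρp : ρ (p : WittVector p k) = 0 := by
    rw [map_natCast]; exact CharP.cast_eq_zero k p
  have hdvd1 : ∀ x : WittVector p k, (p : WittVector p k) ∣ x ↔ ρ x = 0 := by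
    intro x
    rw [← pow_one (p : WittVector p k), aux_dvd_iff]
    constructor
    · intro h; rw [hρ]; exact h 0 one_pos
    · intro h i hi
      have : i = 0 := by omega
      subst this
      rw [← hρ]; exact h
  -- coordinates with respect to the basis (x₀, y₀)
  have hcoords : ∀ c₁ c₂ d₁ d₂ : WittVector p k,
      c₁ • x₀ + c₂ • y₀ = d₁ • x₀ + d₂ • y₀ → c₁ = d₁ ∧ c₂ = d₂ := by
    intro c₁ c₂ d₁ d₂ hcd
    rw [← hb0, ← hb1] at hcd
    have h0 := congrArg (fun m => (b.repr m) 0) hcd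
    have h1 := congrArg (fun m => (b.repr m) 1) hcd
    simp only [map_add, map_smul, Module.Basis.repr_self, Finsupp.add_apply, Finsupp.smul_apply,
      Finsupp.single_eq_same, Finsupp.single_apply, smul_eq_mul] at h0 h1
    norm_num at h0 h1
    exact ⟨h0, h1⟩
  -- F y₀ and V x₀ in coordinates
  obtain ⟨z, hz⟩ := hFFPM x₀
  set av := b.repr z 0 with havdef
  set bv := b.repr z 1 with hbvdef
  have hzab : z = av • x₀ + bv • y₀ := by
    have hsum := b.sum_repr z
    rw [Fin.sum_univ_two, hb0, hb1] at hsum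
    exact hsum.symm
  have hFyF : F y₀ = (p : WittVector p k) • z := by rw [hy₀def]; exact hz
  have hFy : F y₀ = ((p : WittVector p k) * av) • x₀ + ((p : WittVector p k) * bv) • y₀ := by
    rw [hFyF, hzab, smul_add, smul_smul, smul_smul]
  set αv := b.repr (V x₀) 0 with hαvdef
  set βv := b.repr (V x₀) 1 with hβvdef
  have hVx : V x₀ = αv • x₀ + βv • y₀ := by
    have hsum := b.sum_repr (V x₀)
    rw [Fin.sum_univ_two, hb0, hb1] at hsum
    exact hsum.symm
  have hVy : V y₀ = (p : WittVector p k) • x₀ := by rw [hy₀def]; exact hVF x₀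
  have hFcomb : ∀ s t : WittVector p k, F (s • x₀ + t • y₀) =
      (σ t * ((p : WittVector p k) * av)) • x₀ +
      (σ s + σ t * ((p : WittVector p k) * bv)) • y₀ := by
    intro s t
    rw [hFadd, hFsmul, hFsmul, ← hy₀def, hFy, smul_add, smul_smul, smul_smul]
    module
  have hVcomb : ∀ s t : WittVector p k, V (s • x₀ + t • y₀) =
      (σ.symm s * αv + σ.symm t * (p : WittVector p k)) • x₀ + (σ.symm s * βv) • y₀ := by
    intro s t
    rw [hVadd, hVsmul, hVsmul, hVx, hVy, smul_add, smul_smul, smul_smul, smul_smul]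
    module
  -- the fundamental constraints
  have hcon : F (V x₀) = (p : WittVector p k) • x₀ := hFV x₀
  rw [hVx, hFcomb] at hcon
  obtain ⟨hc1, hc2⟩ := hcoords (σ βv * ((p : WittVector p k) * av))
    (σ αv + σ βv * ((p : WittVector p k) * bv)) (p : WittVector p k) 0
    (by rw [zero_smul, add_zero]; exact hcon)
  have hc1' : σ βv * av = 1 := by
    apply mul_left_cancel₀ hpne
    linear_combination hc1
  have hBA : (ρ βv)^p * (ρ av) = 1 := by
    have h := congrArg ρ hc1'
    rwa [map_mul, hρσ, map_one] at h
  have hBne : (ρ βv)^p ≠ 0 := left_ne_zero_of_mul_eq_one hBA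
  have hAne : (ρ av) ≠ 0 := right_ne_zero_of_mul_eq_one hBA
  set A := (ρ av)^p with hAdef
  set B := (ρ βv)^p with hBdef
  have hA : A ≠ 0 := pow_ne_zero _ hAne
  have hpp : 1 < p * p := by nlinarith [hp.out.two_le]
  -- the twisted equations
  set Φ₁ : WittVector p k → WittVector p k → WittVector p k :=
    fun s t => σ (σ t) * σ av + s * (σ βv * bv) - t with hΦ1def
  set Φ₂ : WittVector p k → WittVector p k → WittVector p k :=
    fun s t => σ (σ s) + (p : WittVector p k) * (σ (σ t) * σ bv) - s * σ βv with hΦ2def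
  have hρΦ1 : ∀ s t, ρ (Φ₁ s t) = A * (ρ t)^(p*p) + ρ s * (B * ρ bv) - ρ t := by
    intro s t
    show ρ (σ (σ t) * σ av + s * (σ βv * bv) - t) = _
    simp only [map_sub, map_add, map_mul, hρσ]
    rw [hAdef, hBdef]
    ring
  have hρΦ2 : ∀ s t, ρ (Φ₂ s t) = (ρ s)^(p*p) - ρ s * B := by
    intro s t
    show ρ (σ (σ s) + (p : WittVector p k) * (σ (σ t) * σ bv) - s * σ βv) = _
    simp only [map_sub, map_add, map_mul, hρσ, hρp]
    rw [hBdef]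
    ring
  have hΦ1exp : ∀ s t u v : WittVector p k, ∀ n : ℕ,
      Φ₁ (s + (p : WittVector p k)^n * u) (t + (p : WittVector p k)^n * v) =
        Φ₁ s t + (p : WittVector p k)^n * Φ₁ u v := by
    intro s t u v n
    show σ (σ (t + _)) * σ av + _ * (σ βv * bv) - _ = _
    simp only [map_add, map_mul, map_pow, map_natCast]
    ring
  have hΦ2exp : ∀ s t u v : WittVector p k, ∀ n : ℕ,
      Φ₂ (s + (p : WittVector p k)^n * u) (t + (p : WittVector p k)^n * v) =
        Φ₂ s t + (p : WittVector p k)^n * Φ₂ u v := by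
    intro s t u v n
    show σ (σ (s + _)) + (p : WittVector p k) * (σ (σ (t + _)) * σ bv) - _ * σ βv = _
    simp only [map_add, map_mul, map_pow, map_natCast]
    ring
  -- lifting of residues
  set lift : k → WittVector p k := fun c => WittVector.mk p (fun i => if i = 0 then c else 0)
    with hliftdef
  have hρlift : ∀ c, ρ (lift c) = c := by
    intro c
    rw [hρ, hliftdef]
    simp [WittVector.coeff_mk]
  -- the base approximation
  obtain ⟨S, hSne, hSeq⟩ := aux_k1 B hBne (p*p) hpp
  obtain ⟨T, hTeq⟩ := aux_ksolve A (-1) (-(S * (B * ρ bv))) hA (p*p) hpp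
  have base : ∃ st : WittVector p k × WittVector p k, ρ st.1 ≠ 0 ∧
      (p : WittVector p k)^1 ∣ Φ₁ st.1 st.2 ∧ (p : WittVector p k)^1 ∣ Φ₂ st.1 st.2 := by
    refine ⟨(lift S, lift T), by rw [hρlift]; exact hSne, ?_, ?_⟩
    · rw [pow_one, hdvd1, hρΦ1, hρlift, hρlift]
      linear_combination hTeq
    · rw [pow_one, hdvd1, hρΦ2, hρlift]
      linear_combination hSeq
  -- the inductive step
  have step : ∀ n : ℕ, 1 ≤ n → ∀ st : WittVector p k × WittVector p k,
      (ρ st.1 ≠ 0 ∧ (p : WittVector p k)^n ∣ Φ₁ st.1 st.2 ∧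
        (p : WittVector p k)^n ∣ Φ₂ st.1 st.2) →
      ∃ st' : WittVector p k × WittVector p k,
        (ρ st'.1 ≠ 0 ∧ (p : WittVector p k)^(n+1) ∣ Φ₁ st'.1 st'.2 ∧
          (p : WittVector p k)^(n+1) ∣ Φ₂ st'.1 st'.2) ∧
        (p : WittVector p k)^n ∣ (st'.1 - st.1) ∧ (p : WittVector p k)^n ∣ (st'.2 - st.2) := by
    rintro n hn ⟨s, t⟩ ⟨hs0, ⟨c₁, hc₁⟩, ⟨c₂, hc₂⟩⟩
    obtain ⟨U, hU⟩ := aux_ksolve 1 (-B) (-(ρ c₂)) one_ne_zero (p*p) hpp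
    obtain ⟨Vv, hVv⟩ := aux_ksolve A (-1) (-(ρ c₁) - U * (B * ρ bv)) hA (p*p) hpp
    refine ⟨(s + (p : WittVector p k)^n * lift U, t + (p : WittVector p k)^n * lift Vv),
      ⟨?_, ?_, ?_⟩, ⟨lift U, by ring⟩, ⟨lift Vv, by ring⟩⟩
    · show ρ (s + (p : WittVector p k)^n * lift U) ≠ 0
      rw [map_add, map_mul, map_pow, hρp, zero_pow (by omega : n ≠ 0), zero_mul, add_zero]
      exact hs0
    · show (p : WittVector p k)^(n+1) ∣ Φ₁ _ _
      rw [hΦ1exp, hc₁, ← mul_add, pow_succ]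
      apply mul_dvd_mul_left
      rw [hdvd1, map_add, hρΦ1, hρlift, hρlift]
      linear_combination hVv
    · show (p : WittVector p k)^(n+1) ∣ Φ₂ _ _
      rw [hΦ2exp, hc₂, ← mul_add, pow_succ]
      apply mul_dvd_mul_left
      rw [hdvd1, map_add, hρΦ2, hρlift]
      linear_combination hU
  -- construct the approximating sequence
  have seq : ∃ f : ℕ → WittVector p k × WittVector p k,
      (∀ n, ρ (f n).1 ≠ 0 ∧ (p : WittVector p k)^(n+1) ∣ Φ₁ (f n).1 (f n).2 ∧
        (p : WittVector p k)^(n+1) ∣ Φ₂ (f n).1 (f n).2) ∧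
      (∀ n, (p : WittVector p k)^(n+1) ∣ ((f (n+1)).1 - (f n).1) ∧
        (p : WittVector p k)^(n+1) ∣ ((f (n+1)).2 - (f n).2)) := by
    obtain ⟨st₀, hst₀⟩ := base
    choose! g hg1 hg2 using step
    set f : ℕ → WittVector p k × WittVector p k :=
      fun n => Nat.rec st₀ (fun m prev => g (m+1) prev) n with hfdef
    have hfsucc : ∀ n, f (n+1) = g (n+1) (f n) := fun n => rfl
    have hinv : ∀ n, ρ (f n).1 ≠ 0 ∧ (p : WittVector p k)^(n+1) ∣ Φ₁ (f n).1 (f n).2 ∧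
        (p : WittVector p k)^(n+1) ∣ Φ₂ (f n).1 (f n).2 := by
      intro n
      induction n with
      | zero => exact hst₀
      | succ n ih =>
        rw [hfsucc]
        exact hg1 (n+1) (by omega) (f n) ih
    exact ⟨f, hinv, fun n => by rw [hfsucc]; exact hg2 (n+1) (by omega) (f n) (hinv n)⟩
  obtain ⟨f, hinv, hstepdvd⟩ := seq
  -- pass to the limit
  have hchain : ∀ u : ℕ → WittVector p k,
      (∀ n, (p : WittVector p k)^(n+1) ∣ (u (n+1) - u n)) →
      ∀ n m, n ≤ m → (p : WittVector p k)^n ∣ (u m - u n) := by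
    intro u hu n m hnm
    induction m with
    | zero =>
      have hn0 : n = 0 := by omega
      subst hn0; simp
    | succ m ih =>
      by_cases hcase : n ≤ m
      · have h2 : (p : WittVector p k)^n ∣ (u (m+1) - u m) :=
          dvd_trans (pow_dvd_pow _ (by omega)) (hu m)
        have h3 : u (m+1) - u n = (u (m+1) - u m) + (u m - u n) := by ring
        rw [h3]
        exact dvd_add h2 (ih hcase)
      · have : n = m + 1 := by omega
        subst this; simp
  obtain ⟨sS, hsS⟩ := aux_limit (fun n => (f n).1) (hchain _ (fun n => (hstepdvd n).1))
  obtain ⟨tS, htS⟩ := aux_limit (fun n => (f n).2) (hchain _ (fun n => (hstepdvd n).2))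
  have hΦz : ∀ Φ : WittVector p k → WittVector p k → WittVector p k,
      (∀ s t u v : WittVector p k, ∀ n : ℕ,
        Φ (s + (p : WittVector p k)^n * u) (t + (p : WittVector p k)^n * v) =
          Φ s t + (p : WittVector p k)^n * Φ u v) →
      (∀ n, (p : WittVector p k)^(n+1) ∣ Φ (f n).1 (f n).2) → Φ sS tS = 0 := by
    intro Φ hexp hdiv
    apply aux_sep
    intro n
    obtain ⟨du, hdu⟩ := hsS n
    obtain ⟨dv, hdv⟩ := htS n
    have heq : Φ sS tS = Φ (f n).1 (f n).2 + (p : WittVector p k)^n * Φ du dv := by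
      rw [← hexp]
      congr 1
      · linear_combination hdu
      · linear_combination hdv
    rw [heq]
    exact dvd_add (dvd_trans (pow_dvd_pow _ (Nat.le_succ n)) (hdiv n)) (dvd_mul_right _ _)
  have hΦ1z : Φ₁ sS tS = 0 := hΦz Φ₁ hΦ1exp (fun n => (hinv n).2.1)
  have hΦ2z : Φ₂ sS tS = 0 := hΦz Φ₂ hΦ2exp (fun n => (hinv n).2.2)
  have hsS0 : ρ sS ≠ 0 := by
    have h := hsS 1
    have hco := (aux_mod_iff 1 sS ((fun n => (f n).1) 1)).mp h 0 (by omega)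
    rw [hρ, hco, ← hρ]
    exact (hinv 1).1
  -- the element e with F e = V e
  set e : M := sS • x₀ + tS • y₀ with hedef
  have he1 : F e = (σ tS * ((p : WittVector p k) * av)) • x₀ +
      (σ sS + σ tS * ((p : WittVector p k) * bv)) • y₀ := hFcomb sS tS
  have he2 : V e = (σ.symm sS * αv + σ.symm tS * (p : WittVector p k)) • x₀ +
      (σ.symm sS * βv) • y₀ := hVcomb sS tS
  have heqy : σ sS + σ tS * ((p : WittVector p k) * bv) = σ.symm sS * βv := by
    apply σ.injective
    simp only [map_add, map_mul, map_natCast, RingEquiv.apply_symm_apply]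
    have h : σ (σ sS) + (p : WittVector p k) * (σ (σ tS) * σ bv) - sS * σ βv = 0 := hΦ2z
    linear_combination h
  have heqx : σ tS * ((p : WittVector p k) * av) =
      σ.symm sS * αv + σ.symm tS * (p : WittVector p k) := by
    apply σ.injective
    simp only [map_add, map_mul, map_natCast, RingEquiv.apply_symm_apply]
    have h1 : σ (σ tS) * σ av + sS * (σ βv * bv) - tS = 0 := hΦ1z
    linear_combination (p : WittVector p k) * h1 - sS * hc2
  have hFeVe : F e = V e := by rw [he1, he2, heqx, heqy]
  -- (e, F e) is a basis
  set gg := σ tS * ((p : WittVector p k) * av) with hggdef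
  set hh := σ sS + σ tS * ((p : WittVector p k) * bv) with hhhdef
  set δ := sS * hh - tS * gg with hδdef
  have hρgg : ρ gg = 0 := by
    rw [hggdef, map_mul, map_mul, hρp, zero_mul, mul_zero]
  have hρhh : ρ hh = (ρ sS)^p := by
    rw [hhhdef, map_add, map_mul, map_mul, hρp, hρσ, zero_mul, mul_zero, add_zero]
  have hρδ : ρ δ = ρ sS * (ρ sS)^p := by
    rw [hδdef, map_sub, map_mul, map_mul, hρgg, hρhh, mul_zero, sub_zero]
  have hδu : IsUnit δ := by
    apply WittVector.isUnit_of_coeff_zero_ne_zero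
    show ρ δ ≠ 0
    rw [hρδ]
    exact mul_ne_zero hsS0 (pow_ne_zero _ hsS0)
  obtain ⟨c, hcinv⟩ := hδu.exists_left_inv
  set e₁ : M := F e with he₁def
  have he₁ : e₁ = gg • x₀ + hh • y₀ := he1
  have hδx : hh • e - tS • e₁ = δ • x₀ := by
    rw [hedef, he₁, hδdef]
    module
  have hδy : sS • e₁ - gg • e = δ • y₀ := by
    rw [hedef, he₁, hδdef]
    module
  have hx₀mem : x₀ = c • (hh • e - tS • e₁) := by
    rw [hδx, smul_smul, hcinv, one_smul]
  have hy₀mem : y₀ = c • (sS • e₁ - gg • e) := by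
    rw [hδy, smul_smul, hcinv, one_smul]
  have hspan : Submodule.span (WittVector p k) (Set.range ![e, e₁]) = ⊤ := by
    apply le_antisymm le_top
    rw [← hgen, Submodule.span_le]
    rintro m (rfl | rfl)
    · rw [hx₀mem]
      exact Submodule.smul_mem _ _ (Submodule.sub_mem _
        (Submodule.smul_mem _ _ (Submodule.subset_span ⟨0, rfl⟩))
        (Submodule.smul_mem _ _ (Submodule.subset_span ⟨1, rfl⟩)))
    · rw [hy₀mem]
      exact Submodule.smul_mem _ _ (Submodule.sub_mem _
        (Submodule.smul_mem _ _ (Submodule.subset_span ⟨1, rfl⟩))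
        (Submodule.smul_mem _ _ (Submodule.subset_span ⟨0, rfl⟩)))
  obtain ⟨bas, hbas0, hbas1⟩ := aux_basis_of_span hrank ![e, e₁] hspan
  rw [Matrix.cons_val_zero] at hbas0
  rw [Matrix.cons_val_one, Matrix.cons_val_zero] at hbas1
  refine ⟨goal1, bas, ?_, ?_, ?_, ?_⟩
  · rw [hbas0, hbas1]
  · rw [hbas0, hbas1]
    exact hFeVe.symm
  · rw [hbas0, hbas1, hFeVe]
    exact hFV e
  · rw [hbas0, hbas1]
    exact hVF e
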